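/- In the Δ-setup, the reduction in the trace of the error covariance expression achieved by adding the symbol x̂ as an extra pilot equals Tr[σ²Q − σ⁴Q² + Q D Dᴴ Q] − Tr[σ²Q₁ − σ⁴Q₁² + Q₁ D₁ D₁ᴴ Q₁] = ‖t‖²( σ² + σ⁴(‖t‖² − 2β) + ‖v‖² − ‖e − u + v‖² ). (This is the closed-form reward Δ_n(a) in Theorem 1 of the paper.) -/

import Mathlib

open Matrix
open scoped ComplexOrder

/-- squared Euclidean norm of a complex vector -/
noncomputable def nsq {n : ℕ} (v : Fin n → ℂ) : ℝ := ∑ i, Complex.normSq (v i)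

section Helpers

variable {n : Type*} [Fintype n]

lemma mul_vmv (A : Matrix n n ℂ) (a b : n → ℂ) :
    A * vecMulVec a b = vecMulVec (A *ᵥ a) b := by
  ext i j
  simp [Matrix.mul_apply, vecMulVec_apply, mulVec, dotProduct, Finset.sum_mul, mul_assoc]

lemma vmv_mul (A : Matrix n n ℂ) (a b : n → ℂ) :
    vecMulVec a b * A = vecMulVec a (b ᵥ* A) := by
  ext i j
  simp [Matrix.mul_apply, vecMulVec_apply, vecMul, dotProduct, Finset.mul_sum, mul_assoc]

lemma vmv_vmv (a b c d : n → ℂ) :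
    vecMulVec a b * vecMulVec c d = (b ⬝ᵥ c) • vecMulVec a d := by
  ext i j
  simp [Matrix.mul_apply, vecMulVec_apply, dotProduct, Finset.sum_mul, Finset.mul_sum]
  exact Finset.sum_congr rfl fun k _ => by ring

lemma trace_vmv (a b : n → ℂ) : Matrix.trace (vecMulVec a b) = b ⬝ᵥ a := by
  simp [Matrix.trace, vecMulVec_apply, dotProduct, Matrix.diag, mul_comm]

lemma vmv_ct (a b : n → ℂ) : (vecMulVec a b)ᴴ = vecMulVec (star b) (star a) := by
  ext i j
  simp [conjTranspose_apply, vecMulVec_apply, mul_comm]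

lemma smul_vmv (c : ℂ) (a b : n → ℂ) : vecMulVec (c • a) b = c • vecMulVec a b := by
  ext i j; simp [vecMulVec_apply, mul_assoc]

lemma vmv_smul (c : ℂ) (a b : n → ℂ) : vecMulVec a (c • b) = c • vecMulVec a b := by
  ext i j; simp [vecMulVec_apply]; ring

lemma vmv_sub (a b c : n → ℂ) : vecMulVec a (b - c) = vecMulVec a b - vecMulVec a c := by
  ext i j; simp [vecMulVec_apply]; ring

lemma nsq_cast {N : ℕ} (x : Fin N → ℂ) : ((nsq x : ℝ) : ℂ) = star x ⬝ᵥ x := by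
  push_cast [nsq, dotProduct]
  exact Finset.sum_congr rfl fun i _ => Complex.normSq_eq_conj_mul_self

lemma nsq_ne_zero {N : ℕ} {x : Fin N → ℂ} (hx : x ≠ 0) : nsq x ≠ 0 := by
  intro h
  apply hx
  funext i
  have := (Finset.sum_eq_zero_iff_of_nonneg
    (fun i _ => Complex.normSq_nonneg (x i))).mp h i (Finset.mem_univ i)
  simpa [Complex.normSq_eq_zero] using this

end Helpers

/-- in the Δ-setup, the reduction in the trace of the error
covariance expression achieved by adding the symbol `x̂` as an extra pilot:
`Tr[σ²Q − σ⁴Q² + Q D Dᴴ Q] − Tr[σ²Q₁ − σ⁴Q₁² + Q₁ D₁ D₁ᴴ Q₁]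
  = ‖t‖²(σ² + σ⁴(‖t‖² − 2β) + ‖v‖² − ‖e − u + v‖²)`
(the closed-form reward `Δ_n(a)` of Theorem 1). -/
theorem delta_closed_form
    (N L : ℕ) (σ : ℝ) (hσ : 0 < σ)
    (Xhat X : Matrix (Fin N) (Fin L) ℂ)
    (xh xt : Fin N → ℂ) (hxh : xh ≠ 0)
    (Q D Q₁ D₁ : Matrix (Fin N) (Fin N) ℂ)
    (hQ : Q = (Xhat * Xhatᴴ + ((σ : ℂ) ^ 2) • 1)⁻¹)
    (hD : D = Xhat * (Xhat - X)ᴴ + ((σ : ℂ) ^ 2) • 1)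
    (α : ℝ) (hα : (α : ℂ) = star xh ⬝ᵥ Q *ᵥ xh)
    (t : Fin N → ℂ) (ht : t = ((Real.sqrt (1 + α) : ℝ) : ℂ)⁻¹ • (Q *ᵥ xh))
    (hQ₁ : Q₁ = Q - vecMulVec t (star t))
    (hD₁ : D₁ = D + vecMulVec xh (star (xh - xt)))
    (e u v : Fin N → ℂ)
    (he : e = ((Real.sqrt (1 + α) : ℝ) : ℂ)⁻¹ • (xh - xt))
    (hu : u = Dᴴ *ᵥ t)
    (hv : v = ((nsq t : ℝ) : ℂ)⁻¹ • (Dᴴ *ᵥ (Q *ᵥ t)))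
    (β : ℝ) (hβ : (β : ℂ) = ((nsq t : ℝ) : ℂ)⁻¹ * (star t ⬝ᵥ Q *ᵥ t)) :
    Matrix.trace (((σ : ℂ) ^ 2) • Q - ((σ : ℂ) ^ 4) • (Q * Q) + Q * D * Dᴴ * Q)
        - Matrix.trace
            (((σ : ℂ) ^ 2) • Q₁ - ((σ : ℂ) ^ 4) • (Q₁ * Q₁) + Q₁ * D₁ * D₁ᴴ * Q₁)
      = ((nsq t * (σ ^ 2 + σ ^ 4 * (nsq t - 2 * β) + nsq v - nsq (e - u + v)) : ℝ) : ℂ) := by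
  -- positive definiteness of Q
  have hQpd : Q.PosDef := by
    rw [hQ]
    apply Matrix.PosDef.inv
    apply Matrix.PosDef.posSemidef_add (Matrix.posSemidef_self_mul_conjTranspose Xhat)
    rw [Matrix.smul_one_eq_diagonal, Matrix.posDef_diagonal_iff]
    intro i
    have h2 : ((σ^2 : ℝ) : ℂ) = (σ:ℂ)^2 := by push_cast; ring
    rw [← h2]
    exact_mod_cast (by positivity : (0:ℝ) < σ^2)
  have hQH : Qᴴ = Q := hQpd.isHermitian
  have hαpos : 0 < α := by
    have h := hQpd.dotProduct_mulVec_pos hxh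
    rw [← hα] at h
    exact_mod_cast h
  have h1α : (0:ℝ) < 1 + α := by linarith
  set S : ℂ := ((Real.sqrt (1 + α) : ℝ) : ℂ) with hSdef
  have hS0 : S ≠ 0 := by
    simp only [hSdef, ne_eq, Complex.ofReal_eq_zero]
    exact (Real.sqrt_pos.mpr h1α).ne'
  have hSS : S * S = 1 + (α:ℂ) := by
    rw [hSdef, ← Complex.ofReal_mul, Real.mul_self_sqrt h1α.le]
    push_cast; ring
  have hstarS : star S = S := Complex.conj_ofReal _
  have hQx : Q *ᵥ xh = S • t := by
    rw [ht, smul_smul, mul_inv_cancel₀ hS0, one_smul]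
  have ht0 : t ≠ 0 := by
    intro h
    have h2 : Q *ᵥ xh = 0 := by rw [hQx, h, smul_zero]
    rw [h2] at hα
    simp at hα
    exact absurd hα hαpos.ne'
  have hnt0 : ((nsq t : ℝ) : ℂ) ≠ 0 := by
    exact_mod_cast nsq_ne_zero ht0
  have hntd : star t ⬝ᵥ t = ((nsq t : ℝ) : ℂ) := (nsq_cast t).symm
  have hDQt : Dᴴ *ᵥ (Q *ᵥ t) = ((nsq t : ℝ) : ℂ) • v := by
    rw [hv, smul_smul, mul_inv_cancel₀ hnt0, one_smul]
  have hQtt : star t ⬝ᵥ Q *ᵥ t = ((nsq t : ℝ) : ℂ) * (β:ℂ) := by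
    rw [hβ, ← mul_assoc, mul_inv_cancel₀ hnt0, one_mul]
  have htx : star t ⬝ᵥ xh = (α:ℂ) / S := by
    rw [ht, star_smul, smul_dotProduct, star_dotProduct, ← hα]
    rw [star_inv₀, hstarS, smul_eq_mul, Complex.star_def, Complex.conj_ofReal,
      mul_comm, div_eq_mul_inv]
  -- the key identity : Q₁ * D₁ = Q * D + t (e - u)ᴴ
  have hstare : star e = S⁻¹ • star (xh - xt) := by
    rw [he, star_smul, star_inv₀, hstarS]
  have hstaru : star t ᵥ* D = star u := by
    rw [hu, Matrix.star_mulVec, conjTranspose_conjTranspose]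
  have hSinv : S - (α:ℂ)/S = S⁻¹ := by
    field_simp
    linear_combination hSS
  have key : Q₁ * D₁ = Q * D + vecMulVec t (star (e - u)) := by
    calc Q₁ * D₁
        = Q*D + Q * vecMulVec xh (star (xh - xt))
            - vecMulVec t (star t) * D
            - vecMulVec t (star t) * vecMulVec xh (star (xh-xt)) := by
          rw [hQ₁, hD₁]; noncomm_ring
      _ = Q*D + S • vecMulVec t (star (xh - xt))
            - vecMulVec t (star u)
            - ((α:ℂ)/S) • vecMulVec t (star (xh-xt)) := by
          rw [mul_vmv, hQx, smul_vmv, vmv_mul, hstaru, vmv_vmv, htx]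
      _ = Q * D + vecMulVec t (star (e - u)) := by
          have h3 : star (e - u) = S⁻¹ • star (xh - xt) - star u := by
            rw [star_sub, hstare]
          rw [h3, vmv_sub, vmv_smul, ← hSinv, sub_smul]
          abel
  -- trace identities
  have e1 : Matrix.trace Q₁ = Matrix.trace Q - ((nsq t : ℝ) : ℂ) := by
    rw [hQ₁, Matrix.trace_sub, trace_vmv, hntd]
  have hTrQT : Matrix.trace (Q * vecMulVec t (star t)) = ((nsq t : ℝ) : ℂ) * (β:ℂ) := by
    rw [mul_vmv, trace_vmv, hQtt]
  have e2 : Matrix.trace (Q₁ * Q₁) = Matrix.trace (Q * Q)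
      - ((nsq t : ℝ) : ℂ) * (β:ℂ) - ((nsq t : ℝ) : ℂ) * (β:ℂ)
      + ((nsq t : ℝ) : ℂ) * ((nsq t : ℝ) : ℂ) := by
    have expand : Q₁ * Q₁ = Q*Q - Q * vecMulVec t (star t) - vecMulVec t (star t) * Q
        + vecMulVec t (star t) * vecMulVec t (star t) := by
      rw [hQ₁]; noncomm_ring
    rw [expand, Matrix.trace_add, Matrix.trace_sub, Matrix.trace_sub,
      Matrix.trace_mul_comm (vecMulVec t (star t)) Q, hTrQT,
      vmv_vmv, hntd, Matrix.trace_smul, trace_vmv, hntd, smul_eq_mul]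
  -- main trace identity
  have hQ1H : Q₁ᴴ = Q₁ := by
    rw [hQ₁, conjTranspose_sub, hQH, vmv_ct, star_star]
  have hMH : (Q * D)ᴴ = Dᴴ * Q := by rw [conjTranspose_mul, hQH]
  have hMMH : Q * D * Dᴴ * Q = (Q * D) * (Q * D)ᴴ := by
    rw [hMH, mul_assoc, mul_assoc]
  have hQ1E : Q₁ * D₁ * D₁ᴴ * Q₁ = (Q₁ * D₁) * (Q₁ * D₁)ᴴ := by
    rw [conjTranspose_mul, hQ1H, mul_assoc, mul_assoc]
  have hvw : star t ᵥ* (Q * D) = star (((nsq t : ℝ) : ℂ) • v) := by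
    have h := Matrix.star_mulVec ((Q*D)ᴴ) t
    rw [conjTranspose_conjTranspose] at h
    rw [← h, hMH, ← Matrix.mulVec_mulVec, hDQt]
  have c1 : Matrix.trace ((Q * D) * (vecMulVec t (star (e - u)))ᴴ)
      = ((nsq t : ℝ) : ℂ) * (star v ⬝ᵥ (e - u)) := by
    rw [vmv_ct, star_star, mul_vmv, trace_vmv, Matrix.dotProduct_mulVec, hvw,
      star_smul, smul_dotProduct, smul_eq_mul, Complex.star_def, Complex.conj_ofReal]
  have c2 : Matrix.trace (vecMulVec t (star (e - u)) * (Q * D)ᴴ)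
      = ((nsq t : ℝ) : ℂ) * (star (e - u) ⬝ᵥ v) := by
    rw [Matrix.trace_mul_comm, hMH, mul_vmv, trace_vmv, ← Matrix.mulVec_mulVec, hDQt,
      dotProduct_smul, smul_eq_mul]
  have c3 : Matrix.trace (vecMulVec t (star (e - u)) * (vecMulVec t (star (e - u)))ᴴ)
      = ((nsq (e - u) : ℝ) : ℂ) * ((nsq t : ℝ) : ℂ) := by
    rw [vmv_ct, star_star, vmv_vmv, Matrix.trace_smul, trace_vmv, hntd, smul_eq_mul,
      ← nsq_cast]
  have e3 : Matrix.trace (Q₁ * D₁ * D₁ᴴ * Q₁) = Matrix.trace (Q * D * Dᴴ * Q)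
      + ((nsq t : ℝ) : ℂ) * (star v ⬝ᵥ (e - u))
      + ((nsq t : ℝ) : ℂ) * (star (e - u) ⬝ᵥ v)
      + ((nsq (e - u) : ℝ) : ℂ) * ((nsq t : ℝ) : ℂ) := by
    have expand : Q₁ * D₁ * D₁ᴴ * Q₁
        = (Q * D) * (Q * D)ᴴ + (Q * D) * (vecMulVec t (star (e - u)))ᴴ
          + vecMulVec t (star (e - u)) * (Q * D)ᴴ
          + vecMulVec t (star (e - u)) * (vecMulVec t (star (e - u)))ᴴ := by
      rw [hQ1E, key, conjTranspose_add]
      noncomm_ring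
    rw [expand, Matrix.trace_add, Matrix.trace_add, Matrix.trace_add, c1, c2, c3, ← hMMH]
  have hwv : ((nsq (e - u + v) : ℝ) : ℂ)
      = ((nsq (e - u) : ℝ) : ℂ) + ((nsq v : ℝ) : ℂ)
        + star (e - u) ⬝ᵥ v + star v ⬝ᵥ (e - u) := by
    rw [nsq_cast, nsq_cast, nsq_cast, star_add, add_dotProduct, dotProduct_add,
      dotProduct_add]
    ring
  simp only [Matrix.trace_add, Matrix.trace_sub, Matrix.trace_smul, smul_eq_mul]
  rw [e1, e2, e3]
  push_cast
  rw [hwv]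
  ring
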